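/- arXiv:2010.00508 — 4 statements merged into one kernel-verified Lean document; each statement's English description precedes it below -/
import Mathlib

section
/- Let p ∈ [2,∞) be a real number and let f : [0,1] → ℝ be twice continuously differentiable with f(0) = f(1) = 0. Then ∫₀¹ f''(ξ) · f(ξ) · |f(ξ)|^{p−2} dξ ≤ − π² · (4(p−1)/p²) · ∫₀¹ |f(ξ)|^p dξ. (In other words, the dissipativity constant Λ_p of the Dirichlet Laplacian on (0,1) in L^p satisfies Λ_p ≥ λ₁ · 4(p−1)/p² with λ₁ = π².) -/
open Real
open Set Filter intervalIntegral MeasureTheory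

lemma aux_tendsto_abs_rpow (t : ℝ) (ht : 0 < t) :
    Tendsto (fun x : ℝ => |x| ^ t) (nhds 0) (nhds 0) := by
  have h1 : ContinuousAt (fun y : ℝ => y ^ t) |(0:ℝ)| := by
    simpa using Real.continuousAt_rpow_const 0 t (Or.inr ht.le)
  have h : ContinuousAt (fun x : ℝ => |x| ^ t) 0 :=
    h1.comp continuous_abs.continuousAt
  have h0 : |(0:ℝ)| ^ t = 0 := by
    rw [abs_zero, Real.zero_rpow ht.ne']
  have := h.tendsto
  rwa [h0] at this

/-- derivative of x ↦ x * |x|^q for q ≥ 0 -/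
lemma hasDerivAt_self_mul_abs_rpow (q : ℝ) (hq : 0 ≤ q) (a : ℝ) :
    HasDerivAt (fun x : ℝ => x * |x| ^ q) ((q + 1) * |a| ^ q) a := by
  rcases eq_or_lt_of_le hq with hq0 | hq
  · subst hq0
    simp only [Real.rpow_zero, mul_one, zero_add, one_mul]
    exact hasDerivAt_id' a
  rcases lt_trichotomy a 0 with ha | ha | ha
  · have hd : HasDerivAt (fun x : ℝ => -((-x) ^ (q+1))) ((q + 1) * |a| ^ q) a := by
      have h1 : HasDerivAt (fun x : ℝ => (-x) ^ (q+1)) ((q+1) * (-a) ^ (q+1-1) * (-1)) a :=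
        (Real.hasDerivAt_rpow_const (p := q+1) (x := -a) (Or.inl (by linarith))).comp a
          (hasDerivAt_neg a)
      have h2 := h1.neg
      rw [abs_of_neg ha]
      refine HasDerivAt.congr_deriv h2 ?_
      rw [add_sub_cancel_right]
      ring
    apply hd.congr_of_eventuallyEq
    filter_upwards [eventually_lt_nhds ha] with x hx
    rw [abs_of_neg hx, Real.rpow_add_one (by linarith : (-x) ≠ 0)]
    ring
  · subst ha
    rw [hasDerivAt_iff_tendsto_slope]
    have h00 : (q + 1) * |(0:ℝ)| ^ q = 0 := by
      rw [abs_zero, Real.zero_rpow hq.ne']; ring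
    rw [h00]
    apply squeeze_zero_norm' (a := fun x => |x| ^ q)
    · filter_upwards [self_mem_nhdsWithin] with x (hx : x ≠ 0)
      have hs : slope (fun x : ℝ => x * |x| ^ q) 0 x = |x| ^ q := by
        rw [slope_def_field]
        field_simp
        ring
      rw [hs, Real.norm_eq_abs, abs_of_nonneg (Real.rpow_nonneg (abs_nonneg x) q)]
    · exact (aux_tendsto_abs_rpow q hq).mono_left nhdsWithin_le_nhds
  · have hd : HasDerivAt (fun x : ℝ => x ^ (q+1)) ((q + 1) * |a| ^ q) a := by
      have := Real.hasDerivAt_rpow_const (p := q+1) (x := a) (Or.inl ha.ne')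
      rw [abs_of_pos ha]
      simpa [add_sub_cancel_right] using this
    apply hd.congr_of_eventuallyEq
    filter_upwards [eventually_gt_nhds ha] with x hx
    rw [abs_of_pos hx, Real.rpow_add_one hx.ne']
    ring

lemma abs_self_mul_abs_rpow (t : ℝ) (x : ℝ) (ht : -1 < t) :
    |x * |x| ^ t| = |x| ^ (t + 1) := by
  rcases eq_or_ne x 0 with rfl | hx
  · simp [Real.zero_rpow (by linarith : t + 1 ≠ 0)]
  · rw [abs_mul, abs_of_nonneg (Real.rpow_nonneg (abs_nonneg x) t),
      Real.rpow_add_one (abs_ne_zero.2 hx), mul_comm]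

/-- continuity of x ↦ x * |x|^t for t > -1 -/
lemma continuous_self_mul_abs_rpow (t : ℝ) (ht : -1 < t) :
    Continuous (fun x : ℝ => x * |x| ^ t) := by
  rw [continuous_iff_continuousAt]
  intro a
  rcases eq_or_ne a 0 with rfl | ha
  · unfold ContinuousAt
    have hval : (fun x : ℝ => x * |x| ^ t) 0 = 0 := by simp
    rw [hval]
    apply squeeze_zero_norm' (a := fun x => |x| ^ (t+1))
    · filter_upwards with x
      rw [Real.norm_eq_abs, abs_self_mul_abs_rpow t x ht]
    · exact aux_tendsto_abs_rpow (t+1) (by linarith)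
  · have h1 : ContinuousAt (fun y : ℝ => y ^ t) |a| :=
      Real.continuousAt_rpow_const _ _ (Or.inl (abs_ne_zero.2 ha))
    exact continuousAt_id.mul (h1.comp continuous_abs.continuousAt)

lemma real_le_of_forall_pos_le_add {a b : ℝ} (h : ∀ ε : ℝ, 0 < ε → a ≤ b + ε) : a ≤ b := by
  by_contra hcon
  push_neg at hcon
  have h2 := h ((a - b)/2) (by linarith)
  linarith

lemma poincare (g φ : ℝ → ℝ)
    (hgc : ContinuousOn g (Icc (0:ℝ) 1)) (hφc : ContinuousOn φ (Icc (0:ℝ) 1))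
    (hd : ∀ ξ ∈ Icc (0:ℝ) 1, HasDerivAt (fun x => g x ^ 2) (2 * g ξ * φ ξ) ξ)
    (hg0 : g 0 = 0) (hg1 : g 1 = 0) :
    π ^ 2 * ∫ ξ in (0:ℝ)..1, g ξ ^ 2 ≤ ∫ ξ in (0:ℝ)..1, φ ξ ^ 2 := by
  have pi_pos := Real.pi_pos
  set W : ℝ → ℝ := fun x => -π * Real.tan (π * (x - 1/2)) with hWdef
  have hcos : ∀ x ∈ Ioo (0:ℝ) 1, Real.cos (π * (x - 1/2)) ≠ 0 := by
    intro x hx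
    have : 0 < Real.cos (π * (x - 1/2)) := by
      apply Real.cos_pos_of_mem_Ioo
      constructor
      · have : 0 < π * x := mul_pos pi_pos hx.1
        rw [neg_lt]
        nlinarith
      · have : 0 < π * (1 - x) := mul_pos pi_pos (by linarith [hx.2])
        nlinarith
    exact this.ne'
  have hWd : ∀ x ∈ Ioo (0:ℝ) 1, HasDerivAt W (-(π^2) - W x ^ 2) x := by
    intro x hx
    have hc := hcos x hx
    have h1 : HasDerivAt (fun y : ℝ => π * (y - 1/2)) π x := by
      simpa using ((hasDerivAt_id x).sub_const (1/2:ℝ)).const_mul π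
    have h2 := ((Real.hasDerivAt_tan hc).comp x h1).const_mul (-π)
    have h3 : (1:ℝ) / Real.cos (π * (x - 1/2)) ^ 2 = 1 + Real.tan (π * (x - 1/2)) ^ 2 := by
      rw [← Real.inv_one_add_tan_sq hc, one_div, inv_inv]
    have h4 : -(π^2) - W x ^ 2 = -π * (1 / Real.cos (π * (x - 1/2)) ^ 2 * π) := by
      rw [h3, hWdef]; ring
    rw [h4]
    exact h2
  have hWsym : ∀ x : ℝ, W (1 - x) = -W x := by
    intro x
    simp only [hWdef]
    rw [show π * ((1 - x) - 1/2) = -(π * (x - 1/2)) by ring, Real.tan_neg]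
    ring
  have hWbound : ∀ δ : ℝ, 0 < δ → δ ≤ 1/4 → 0 ≤ W δ ∧ W δ ≤ 1/δ := by
    intro δ hδ hδ4
    have h1 : W δ = π * (Real.tan (π * δ))⁻¹ := by
      simp only [hWdef]
      rw [show π * (δ - 1/2) = -(π/2 - π * δ) by ring, Real.tan_neg,
        Real.tan_pi_div_two_sub]
      ring
    have h2 : π * δ < Real.tan (π * δ) := Real.lt_tan (by positivity) (by nlinarith)
    have h3 : 0 < Real.tan (π * δ) := lt_trans (by positivity) h2
    refine ⟨by rw [h1]; positivity, ?_⟩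
    rw [h1]
    have h5 : (Real.tan (π * δ))⁻¹ ≤ (π * δ)⁻¹ := by
      apply inv_anti₀ (by positivity) h2.le
    calc π * (Real.tan (π * δ))⁻¹ ≤ π * (π * δ)⁻¹ :=
          mul_le_mul_of_nonneg_left h5 pi_pos.le
      _ = 1/δ := by field_simp
  -- bounds on g and φ
  obtain ⟨Mg, hMg⟩ := isCompact_Icc.exists_bound_of_continuousOn hgc
  obtain ⟨Mφ0, hMφ0⟩ := isCompact_Icc.exists_bound_of_continuousOn hφc
  set Mφ : ℝ := max Mφ0 1 with hMφdef
  have hMφ1 : (1:ℝ) ≤ Mφ := le_max_right _ _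
  have hMφ : ∀ x ∈ Icc (0:ℝ) 1, |φ x| ≤ Mφ := fun x hx =>
    le_trans (hMφ0 x hx) (le_max_left _ _)
  have hMgabs : ∀ x ∈ Icc (0:ℝ) 1, |g x| ≤ Mg := hMg
  have hMg0 : 0 ≤ Mg := le_trans (abs_nonneg _) (hMgabs 0 (by norm_num))
  have huIcc : uIcc (0:ℝ) 1 = Icc 0 1 := uIcc_of_le (by norm_num)
  -- global integrabilities
  have hg2c : ContinuousOn (fun x => g x ^ 2) (Icc (0:ℝ) 1) := hgc.pow 2
  have hφ2c : ContinuousOn (fun x => φ x ^ 2) (Icc (0:ℝ) 1) := hφc.pow 2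
  have hIg01 : IntervalIntegrable (fun x => g x ^ 2) volume 0 1 :=
    ContinuousOn.intervalIntegrable (by rwa [huIcc])
  have hIφ01 : IntervalIntegrable (fun x => φ x ^ 2) volume 0 1 :=
    ContinuousOn.intervalIntegrable (by rwa [huIcc])
  -- key inequality on [δ, 1-δ]
  have key : ∀ δ : ℝ, 0 < δ → δ ≤ 1/4 →
      π^2 * ∫ x in δ..(1-δ), g x ^ 2 ≤
        (∫ x in δ..(1-δ), φ x ^ 2) + (W δ * g δ ^ 2 - W (1-δ) * g (1-δ) ^ 2) := by
    intro δ hδ hδ4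
    have hab : δ ≤ 1 - δ := by linarith
    have hsub : Icc δ (1-δ) ⊆ Ioo (0:ℝ) 1 := fun x hx =>
      ⟨lt_of_lt_of_le hδ hx.1, lt_of_le_of_lt hx.2 (by linarith)⟩
    have hsub' : Icc δ (1-δ) ⊆ Icc (0:ℝ) 1 := fun x hx =>
      ⟨le_trans hδ.le hx.1, le_trans hx.2 (by linarith)⟩
    have huIcc2 : uIcc δ (1-δ) = Icc δ (1-δ) := uIcc_of_le hab
    have hWc : ContinuousOn W (Icc δ (1-δ)) := fun x hx =>
      ((hWd x (hsub hx)).continuousAt).continuousWithinAt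
    set H' : ℝ → ℝ := fun x => (-(π^2) - W x ^ 2) * g x ^ 2 + W x * (2 * g x * φ x)
      with hH'def
    have hH'c : ContinuousOn H' (Icc δ (1-δ)) := by
      apply ContinuousOn.add
      · exact (continuousOn_const.sub (hWc.pow 2)).mul ((hgc.mono hsub').pow 2)
      · exact hWc.mul ((continuousOn_const.mul (hgc.mono hsub')).mul (hφc.mono hsub'))
    have hIH' : IntervalIntegrable H' volume δ (1-δ) :=
      ContinuousOn.intervalIntegrable (by rwa [huIcc2])
    have hIg2 : IntervalIntegrable (fun x => g x ^ 2) volume δ (1-δ) :=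
      ContinuousOn.intervalIntegrable (by rw [huIcc2]; exact hg2c.mono hsub')
    have hIφ2 : IntervalIntegrable (fun x => φ x ^ 2) volume δ (1-δ) :=
      ContinuousOn.intervalIntegrable (by rw [huIcc2]; exact hφ2c.mono hsub')
    have hFTC : ∫ x in δ..(1-δ), H' x = W (1-δ) * g (1-δ) ^ 2 - W δ * g δ ^ 2 := by
      apply integral_eq_sub_of_hasDerivAt (f := fun y => W y * g y ^ 2) (f' := H')
      · intro x hx
        rw [huIcc2] at hx
        exact (hWd x (hsub hx)).mul (hd x (hsub' hx))
      · exact hIH'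
    have hnn : 0 ≤ ∫ x in δ..(1-δ), (φ x - W x * g x) ^ 2 :=
      integral_nonneg hab (fun u _ => sq_nonneg _)
    have hexp : ∀ x : ℝ, (φ x - W x * g x) ^ 2 = φ x ^ 2 - (H' x + π^2 * g x ^ 2) := by
      intro x; simp only [hH'def]; ring
    have hsplit : ∫ x in δ..(1-δ), (φ x - W x * g x) ^ 2 =
        (∫ x in δ..(1-δ), φ x ^ 2) -
          ((∫ x in δ..(1-δ), H' x) + π^2 * ∫ x in δ..(1-δ), g x ^ 2) := by
      have h1 : (fun x => (φ x - W x * g x) ^ 2)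
          = fun x => φ x ^ 2 - (H' x + π^2 * g x ^ 2) := funext hexp
      rw [h1, integral_sub hIφ2 (hIH'.add (hIg2.const_mul (π^2))),
        integral_add hIH' (hIg2.const_mul (π^2)), intervalIntegral.integral_const_mul]
    rw [hsplit, hFTC] at hnn
    linarith
  -- epsilon argument
  apply real_le_of_forall_pos_le_add
  intro ε hε
  set ε' : ℝ := ε / (8 * Mφ) with hε'def
  have hε' : 0 < ε' := div_pos hε (by linarith)
  have hc0 : ContinuousWithinAt g (Icc (0:ℝ) 1) 0 := hgc 0 (by norm_num)
  have hc1 : ContinuousWithinAt g (Icc (0:ℝ) 1) 1 := hgc 1 (by norm_num)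
  rw [Metric.continuousWithinAt_iff] at hc0 hc1
  obtain ⟨δ₁, hδ₁, h0near⟩ := hc0 ε' hε'
  obtain ⟨δ₂, hδ₂, h1near⟩ := hc1 ε' hε'
  set δ : ℝ := min (min (δ₁/2) (δ₂/2)) (min (1/4) (ε/(4*π^2*(Mg^2+1)))) with hδdef
  have hδpos : 0 < δ := by
    apply lt_min (lt_min (by linarith) (by linarith))
    apply lt_min (by norm_num)
    positivity
  have hδ4 : δ ≤ 1/4 := le_trans (min_le_right _ _) (min_le_left _ _)
  have hδε : δ ≤ ε/(4*π^2*(Mg^2+1)) := le_trans (min_le_right _ _) (min_le_right _ _)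
  have hδδ₁ : δ < δ₁ := lt_of_le_of_lt (le_trans (min_le_left _ _) (min_le_left _ _)) (by linarith)
  have hδδ₂ : δ < δ₂ := lt_of_le_of_lt (le_trans (min_le_left _ _) (min_le_right _ _)) (by linarith)
  -- g is small near the endpoints
  have hgsmall0 : ∀ x ∈ Icc (0:ℝ) δ, |g x| ≤ ε' := by
    intro x hx
    have hxI : x ∈ Icc (0:ℝ) 1 := ⟨hx.1, le_trans hx.2 (by linarith)⟩
    have := h0near hxI (by
      rw [Real.dist_eq, sub_zero, abs_of_nonneg hx.1]
      exact lt_of_le_of_lt hx.2 hδδ₁)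
    rw [Real.dist_eq, hg0, sub_zero] at this
    exact this.le
  have hgsmall1 : ∀ x ∈ Icc (1-δ) (1:ℝ), |g x| ≤ ε' := by
    intro x hx
    have hxI : x ∈ Icc (0:ℝ) 1 := ⟨by linarith [hx.1], hx.2⟩
    have := h1near hxI (by
      rw [Real.dist_eq, abs_of_nonpos (by linarith [hx.2])]
      linarith [hx.1])
    rw [Real.dist_eq, hg1, sub_zero] at this
    exact this.le
  have hgφc : ContinuousOn (fun x => 2 * g x * φ x) (Icc (0:ℝ) 1) :=
    (continuousOn_const.mul hgc).mul hφc
  -- endpoint values of g² are O(δ)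
  have hgδ : g δ ^ 2 ≤ 2 * Mφ * ε' * δ := by
    have hsub0 : Icc (0:ℝ) δ ⊆ Icc (0:ℝ) 1 := Icc_subset_Icc le_rfl (by linarith)
    have huIcc0 : uIcc (0:ℝ) δ = Icc 0 δ := uIcc_of_le hδpos.le
    have hFTC0 : ∫ x in (0:ℝ)..δ, (2 * g x * φ x) = g δ ^ 2 - g 0 ^ 2 := by
      apply integral_eq_sub_of_hasDerivAt (f := fun y => g y ^ 2)
      · intro x hx
        rw [huIcc0] at hx
        exact hd x (hsub0 hx)
      · exact ContinuousOn.intervalIntegrable (by rw [huIcc0]; exact hgφc.mono hsub0)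
    have hbd : ‖∫ x in (0:ℝ)..δ, (2 * g x * φ x)‖ ≤ 2 * Mφ * ε' * |δ - 0| := by
      apply intervalIntegral.norm_integral_le_of_norm_le_const
      intro x hx
      rw [Set.uIoc_of_le hδpos.le] at hx
      have hxI : x ∈ Icc (0:ℝ) δ := ⟨hx.1.le, hx.2⟩
      rw [Real.norm_eq_abs, abs_mul, abs_mul, abs_two]
      calc 2 * |g x| * |φ x| ≤ 2 * ε' * Mφ := by
            apply mul_le_mul _ (hMφ x (hsub0 hxI)) (abs_nonneg _) (by positivity)
            exact mul_le_mul_of_nonneg_left (hgsmall0 x hxI) (by norm_num)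
        _ = 2 * Mφ * ε' := by ring
    rw [hFTC0, hg0, Real.norm_eq_abs] at hbd
    rw [show ((0:ℝ)) ^ 2 = 0 by norm_num, sub_zero, abs_of_nonneg (sq_nonneg (g δ)),
      sub_zero, abs_of_nonneg hδpos.le] at hbd
    exact hbd
  have hg1δ : g (1-δ) ^ 2 ≤ 2 * Mφ * ε' * δ := by
    have hsub1 : Icc (1-δ) (1:ℝ) ⊆ Icc (0:ℝ) 1 := Icc_subset_Icc (by linarith) le_rfl
    have hab1 : (1:ℝ) - δ ≤ 1 := by linarith
    have huIcc1 : uIcc (1-δ) (1:ℝ) = Icc (1-δ) 1 := uIcc_of_le hab1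
    have hFTC1 : ∫ x in (1-δ)..(1:ℝ), (2 * g x * φ x) = g 1 ^ 2 - g (1-δ) ^ 2 := by
      apply integral_eq_sub_of_hasDerivAt (f := fun y => g y ^ 2)
      · intro x hx
        rw [huIcc1] at hx
        exact hd x (hsub1 hx)
      · exact ContinuousOn.intervalIntegrable (by rw [huIcc1]; exact hgφc.mono hsub1)
    have hbd : ‖∫ x in (1-δ)..(1:ℝ), (2 * g x * φ x)‖ ≤ 2 * Mφ * ε' * |1 - (1-δ)| := by
      apply intervalIntegral.norm_integral_le_of_norm_le_const
      intro x hx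
      rw [Set.uIoc_of_le hab1] at hx
      have hxI : x ∈ Icc (1-δ) (1:ℝ) := ⟨hx.1.le, hx.2⟩
      rw [Real.norm_eq_abs, abs_mul, abs_mul, abs_two]
      calc 2 * |g x| * |φ x| ≤ 2 * ε' * Mφ := by
            apply mul_le_mul _ (hMφ x (hsub1 hxI)) (abs_nonneg _) (by positivity)
            exact mul_le_mul_of_nonneg_left (hgsmall1 x hxI) (by norm_num)
        _ = 2 * Mφ * ε' := by ring
    rw [hFTC1, hg1, Real.norm_eq_abs] at hbd
    rw [show ((0:ℝ)) ^ 2 = 0 by norm_num, zero_sub, abs_neg,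
      abs_of_nonneg (sq_nonneg (g (1-δ))),
      show (1:ℝ) - (1-δ) = δ by ring, abs_of_nonneg hδpos.le] at hbd
    exact hbd
  -- boundary terms
  obtain ⟨hW0, hW1⟩ := hWbound δ hδpos hδ4
  have hT0 : W δ * g δ ^ 2 ≤ 2 * Mφ * ε' := by
    calc W δ * g δ ^ 2 ≤ (1/δ) * (2 * Mφ * ε' * δ) :=
          mul_le_mul hW1 hgδ (sq_nonneg _) (by positivity)
      _ = 2 * Mφ * ε' := by field_simp
  have hT1 : -(W (1-δ) * g (1-δ) ^ 2) ≤ 2 * Mφ * ε' := by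
    rw [hWsym δ]
    calc -(-W δ * g (1-δ) ^ 2) = W δ * g (1-δ) ^ 2 := by ring
      _ ≤ (1/δ) * (2 * Mφ * ε' * δ) := mul_le_mul hW1 hg1δ (sq_nonneg _) (by positivity)
      _ = 2 * Mφ * ε' := by field_simp
  -- splitting the integrals
  have huIcc0 : uIcc (0:ℝ) δ = Icc 0 δ := uIcc_of_le hδpos.le
  have hab : δ ≤ 1 - δ := by linarith
  have hab1 : (1:ℝ) - δ ≤ 1 := by linarith
  have hsubm : uIcc δ (1-δ) ⊆ uIcc (0:ℝ) 1 := by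
    rw [uIcc_of_le hab, huIcc]; exact Icc_subset_Icc (by linarith) (by linarith)
  have hsub0u : uIcc (0:ℝ) δ ⊆ uIcc (0:ℝ) 1 := by
    rw [huIcc0, huIcc]; exact Icc_subset_Icc le_rfl (by linarith)
  have hsub1u : uIcc (1-δ) (1:ℝ) ⊆ uIcc (0:ℝ) 1 := by
    rw [uIcc_of_le hab1, huIcc]; exact Icc_subset_Icc (by linarith) le_rfl
  have hsub0mu : uIcc (0:ℝ) (1-δ) ⊆ uIcc (0:ℝ) 1 := by
    rw [uIcc_of_le (by linarith : (0:ℝ) ≤ 1-δ), huIcc]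
    exact Icc_subset_Icc le_rfl (by linarith)
  have hIg0δ := hIg01.mono_set hsub0u
  have hIgm := hIg01.mono_set hsubm
  have hIg1δ := hIg01.mono_set hsub1u
  have hIg0m := hIg01.mono_set hsub0mu
  have hIφ0δ := hIφ01.mono_set hsub0u
  have hIφm := hIφ01.mono_set hsubm
  have hIφ1δ := hIφ01.mono_set hsub1u
  have hadjg : (∫ x in (0:ℝ)..δ, g x ^ 2) + (∫ x in δ..(1-δ), g x ^ 2)
      + (∫ x in (1-δ)..(1:ℝ), g x ^ 2) = ∫ x in (0:ℝ)..1, g x ^ 2 := by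
    rw [integral_add_adjacent_intervals hIg0δ hIgm]
    exact integral_add_adjacent_intervals hIg0m hIg1δ
  have hadjφ : (∫ x in (0:ℝ)..δ, φ x ^ 2) + (∫ x in δ..(1-δ), φ x ^ 2)
      + (∫ x in (1-δ)..(1:ℝ), φ x ^ 2) = ∫ x in (0:ℝ)..1, φ x ^ 2 := by
    rw [integral_add_adjacent_intervals hIφ0δ hIφm]
    exact integral_add_adjacent_intervals (hIφ01.mono_set hsub0mu) hIφ1δ
  -- bounds on the small pieces
  have hgpiece : ∀ x ∈ Icc (0:ℝ) 1, ‖g x ^ 2‖ ≤ Mg ^ 2 := by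
    intro x hx
    rw [Real.norm_eq_abs, abs_of_nonneg (sq_nonneg _), ← sq_abs]
    exact pow_le_pow_left₀ (abs_nonneg _) (hMgabs x hx) 2
  have hg0piece : ∫ x in (0:ℝ)..δ, g x ^ 2 ≤ Mg ^ 2 * δ := by
    have := intervalIntegral.norm_integral_le_of_norm_le_const (C := Mg ^ 2)
      (a := (0:ℝ)) (b := δ) (f := fun x => g x ^ 2) (fun x hx => by
        rw [Set.uIoc_of_le hδpos.le] at hx
        exact hgpiece x ⟨hx.1.le, le_trans hx.2 (by linarith)⟩)
    rw [Real.norm_eq_abs, sub_zero, abs_of_nonneg hδpos.le] at this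
    exact le_trans (le_abs_self _) this
  have hg1piece : ∫ x in (1-δ)..(1:ℝ), g x ^ 2 ≤ Mg ^ 2 * δ := by
    have := intervalIntegral.norm_integral_le_of_norm_le_const (C := Mg ^ 2)
      (a := (1-δ:ℝ)) (b := (1:ℝ)) (f := fun x => g x ^ 2) (fun x hx => by
        rw [Set.uIoc_of_le hab1] at hx
        exact hgpiece x ⟨by linarith [hx.1], hx.2⟩)
    rw [Real.norm_eq_abs, show (1:ℝ) - (1-δ) = δ by ring, abs_of_nonneg hδpos.le] at this
    exact le_trans (le_abs_self _) this
  have hφ0piece : 0 ≤ ∫ x in (0:ℝ)..δ, φ x ^ 2 :=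
    integral_nonneg hδpos.le (fun u _ => sq_nonneg _)
  have hφ1piece : 0 ≤ ∫ x in (1-δ)..(1:ℝ), φ x ^ 2 :=
    integral_nonneg hab1 (fun u _ => sq_nonneg _)
  -- arithmetic facts
  have hMφε : Mφ * ε' = ε / 8 := by
    rw [hε'def]
    field_simp
  have hD : (0:ℝ) < 4*π^2*(Mg^2+1) := by positivity
  have hδD : δ * (4*π^2*(Mg^2+1)) ≤ ε := (le_div_iff₀ hD).1 hδε
  have hMgδ : π^2 * Mg^2 * δ * 4 ≤ ε := by
    have hpd : (0:ℝ) ≤ 4*π^2*δ := by positivity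
    nlinarith [hδD]
  -- put it all together
  have hkey := key δ hδpos hδ4
  have hmulg : π^2 * ∫ x in (0:ℝ)..1, g x ^ 2 =
      π^2 * (∫ x in (0:ℝ)..δ, g x ^ 2) + π^2 * (∫ x in δ..(1-δ), g x ^ 2)
      + π^2 * (∫ x in (1-δ)..(1:ℝ), g x ^ 2) := by
    rw [← hadjg]; ring
  have hpg0 : π^2 * (∫ x in (0:ℝ)..δ, g x ^ 2) ≤ π^2 * (Mg^2 * δ) :=
    mul_le_mul_of_nonneg_left hg0piece (sq_nonneg π)
  have hpg1 : π^2 * (∫ x in (1-δ)..(1:ℝ), g x ^ 2) ≤ π^2 * (Mg^2 * δ) :=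
    mul_le_mul_of_nonneg_left hg1piece (sq_nonneg π)
  linarith [hkey, hT0, hT1, hadjφ, hφ0piece, hφ1piece, hmulg, hpg0, hpg1, hMgδ, hMφε]

/-- Dissipativity of the Dirichlet Laplacian on `(0,1)` in `L^p`: for a real `p ∈ [2,∞)`
and a twice continuously differentiable `f : [0,1] → ℝ` (with first and second derivatives
`f'` and `f''`) vanishing at the endpoints,
`∫₀¹ f'' f |f|^{p-2} ≤ -π² (4(p-1)/p²) ∫₀¹ |f|^p`,
i.e. `Λ_p ≥ λ₁ · 4(p-1)/p²` with `λ₁ = π²`. Here the powers are real powers, and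
`f·|f|^{p-2}` vanishes wherever `f` vanishes (automatic with the factor `f`). -/
theorem dirichlet_laplacian_Lp_dissipativity
    (p : ℝ) (hp : 2 ≤ p)
    (f f' f'' : ℝ → ℝ)
    (hf' : ∀ ξ ∈ Set.Icc (0 : ℝ) 1, HasDerivAt f (f' ξ) ξ)
    (hf'' : ∀ ξ ∈ Set.Icc (0 : ℝ) 1, HasDerivAt f' (f'' ξ) ξ)
    (hcont : ContinuousOn f'' (Set.Icc (0 : ℝ) 1))
    (h0 : f 0 = 0) (h1 : f 1 = 0) :
    ∫ ξ in (0 : ℝ)..1, f'' ξ * f ξ * |f ξ| ^ (p - 2) ≤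
      -(π ^ 2) * (4 * (p - 1) / p ^ 2) * ∫ ξ in (0 : ℝ)..1, |f ξ| ^ p := by
  have hq0 : (0:ℝ) ≤ p - 2 := by linarith
  have hfc : ContinuousOn f (Icc (0:ℝ) 1) := fun ξ hξ =>
    (hf' ξ hξ).continuousAt.continuousWithinAt
  have hf'c : ContinuousOn f' (Icc (0:ℝ) 1) := fun ξ hξ =>
    (hf'' ξ hξ).continuousAt.continuousWithinAt
  have huIcc : uIcc (0:ℝ) 1 = Icc 0 1 := uIcc_of_le (by norm_num)
  have hΦc : Continuous (fun x : ℝ => x * |x| ^ (p-2)) :=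
    continuous_self_mul_abs_rpow _ (by linarith)
  have habsc : Continuous (fun x : ℝ => |x| ^ (p-2)) :=
    continuous_abs.rpow_const (fun x => Or.inr hq0)
  -- continuity of the two parts of the derivative
  have hAc : ContinuousOn (fun ξ => f'' ξ * (f ξ * |f ξ| ^ (p-2))) (Icc (0:ℝ) 1) :=
    hcont.mul (hΦc.comp_continuousOn hfc)
  have hBc : ContinuousOn (fun ξ => f' ξ * ((p - 2 + 1) * |f ξ| ^ (p-2) * f' ξ))
      (Icc (0:ℝ) 1) :=
    hf'c.mul (((continuous_const.mul habsc).comp_continuousOn hfc).mul hf'c)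
  have hIA : IntervalIntegrable (fun ξ => f'' ξ * (f ξ * |f ξ| ^ (p-2))) volume 0 1 :=
    ContinuousOn.intervalIntegrable (by rwa [huIcc])
  have hIB : IntervalIntegrable (fun ξ => f' ξ * ((p - 2 + 1) * |f ξ| ^ (p-2) * f' ξ))
      volume 0 1 := ContinuousOn.intervalIntegrable (by rwa [huIcc])
  -- integration by parts via FTC
  have hFTC : ∫ ξ in (0:ℝ)..1,
      (f'' ξ * (f ξ * |f ξ| ^ (p-2)) + f' ξ * ((p - 2 + 1) * |f ξ| ^ (p-2) * f' ξ))
      = f' 1 * (f 1 * |f 1| ^ (p-2)) - f' 0 * (f 0 * |f 0| ^ (p-2)) := by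
    apply integral_eq_sub_of_hasDerivAt (f := fun x => f' x * (f x * |f x| ^ (p-2)))
    · intro ξ hξ
      rw [huIcc] at hξ
      have hinner := (hasDerivAt_self_mul_abs_rpow (p-2) hq0 (f ξ)).comp ξ (hf' ξ hξ)
      exact (hf'' ξ hξ).mul hinner
    · exact hIA.add hIB
  rw [h0, h1] at hFTC
  simp only [zero_mul, mul_zero, sub_zero] at hFTC
  have hsplit : (∫ ξ in (0:ℝ)..1, f'' ξ * (f ξ * |f ξ| ^ (p-2)))
      + (∫ ξ in (0:ℝ)..1, f' ξ * ((p - 2 + 1) * |f ξ| ^ (p-2) * f' ξ)) = 0 := by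
    rw [← integral_add hIA hIB]
    exact hFTC
  set J : ℝ := ∫ ξ in (0:ℝ)..1, |f ξ| ^ (p-2) * f' ξ ^ 2 with hJdef
  have hBJ : (∫ ξ in (0:ℝ)..1, f' ξ * ((p - 2 + 1) * |f ξ| ^ (p-2) * f' ξ))
      = (p - 1) * J := by
    have he : (fun ξ => f' ξ * ((p - 2 + 1) * |f ξ| ^ (p-2) * f' ξ))
        = fun ξ => (p - 1) * (|f ξ| ^ (p-2) * f' ξ ^ 2) := funext fun ξ => by ring
    rw [he, hJdef, intervalIntegral.integral_const_mul]
  have hAeq : (∫ ξ in (0:ℝ)..1, f'' ξ * f ξ * |f ξ| ^ (p-2))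
      = ∫ ξ in (0:ℝ)..1, f'' ξ * (f ξ * |f ξ| ^ (p-2)) := by
    congr 1
    funext ξ
    ring
  have hIBP : (∫ ξ in (0:ℝ)..1, f'' ξ * f ξ * |f ξ| ^ (p-2)) = -((p-1) * J) := by
    rw [hAeq]; linarith [hsplit, hBJ]
  set K : ℝ := ∫ ξ in (0:ℝ)..1, |f ξ| ^ p with hKdef
  -- main case split
  rcases eq_or_lt_of_le hp with hp2 | hp2
  · -- p = 2
    subst hp2
    have hJ' : J = ∫ ξ in (0:ℝ)..1, f' ξ ^ 2 := by
      rw [hJdef]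
      congr 1
      funext ξ
      norm_num
    have hK' : K = ∫ ξ in (0:ℝ)..1, f ξ ^ 2 := by
      rw [hKdef]
      congr 1
      funext ξ
      rw [show ((2:ℝ)) = ((2:ℕ):ℝ) by norm_num, Real.rpow_natCast, sq_abs]
    have hpoin := poincare f f' hfc hf'c (fun ξ hξ => by
      refine HasDerivAt.congr_deriv ((hf' ξ hξ).pow 2) ?_
      norm_num) h0 h1
    rw [← hK', ← hJ'] at hpoin
    have : -(π ^ 2) * (4 * (2 - 1) / 2 ^ 2) * K = -(π^2) * K := by ring
    rw [this]
    rw [hIBP]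
    nlinarith [hpoin]
  · -- p > 2
    set r : ℝ := p / 2 with hrdef
    have hr1 : 1 < r := by rw [hrdef]; linarith
    set g : ℝ → ℝ := fun ξ => |f ξ| ^ r with hgdef
    set φ : ℝ → ℝ := fun ξ => r * (f ξ * |f ξ| ^ (r - 2)) * f' ξ with hφdef
    have hψc : Continuous (fun x : ℝ => x * |x| ^ (r - 2)) :=
      continuous_self_mul_abs_rpow _ (by linarith)
    have hgc : ContinuousOn g (Icc (0:ℝ) 1) :=
      (continuous_abs.rpow_const (fun x => Or.inr (by linarith))).comp_continuousOn hfc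
    have hφc : ContinuousOn φ (Icc (0:ℝ) 1) :=
      ((continuous_const.mul hψc).comp_continuousOn hfc).mul hf'c
    have hgsq : ∀ y : ℝ, (|y| ^ r) ^ 2 = |y| ^ p := by
      intro y
      rw [← Real.rpow_natCast (|y| ^ r) 2, ← Real.rpow_mul (abs_nonneg y)]
      norm_num
      rw [show r * 2 = p by rw [hrdef]; ring]
    have hderiv_eq : ∀ y : ℝ, 2 * |y| ^ r * (r * (y * |y| ^ (r - 2)))
        = p * |y| ^ (p - 2) * y := by
      intro y
      rcases eq_or_ne y 0 with rfl | hy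
      · simp
      · rw [show 2 * |y| ^ r * (r * (y * |y| ^ (r - 2)))
            = (2 * r) * (|y| ^ r * |y| ^ (r - 2)) * y by ring,
          ← Real.rpow_add (abs_pos.mpr hy),
          show r + (r - 2) = p - 2 by rw [hrdef]; ring,
          show 2 * r = p by rw [hrdef]; ring]
    have hd : ∀ ξ ∈ Icc (0:ℝ) 1, HasDerivAt (fun x => g x ^ 2) (2 * g ξ * φ ξ) ξ := by
      intro ξ hξ
      have h1 := (hasDerivAt_abs_rpow (f ξ) (by linarith : 1 < p)).comp ξ (hf' ξ hξ)
      have hfun : (fun x => g x ^ 2) = fun x => |f x| ^ p := funext fun x => hgsq (f x)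
      have hval : 2 * g ξ * φ ξ = (p * |f ξ| ^ (p - 2) * f ξ) * f' ξ := by
        rw [hgdef, hφdef]
        calc 2 * |f ξ| ^ r * (r * (f ξ * |f ξ| ^ (r - 2)) * f' ξ)
            = 2 * |f ξ| ^ r * (r * (f ξ * |f ξ| ^ (r - 2))) * f' ξ := by ring
          _ = p * |f ξ| ^ (p - 2) * f ξ * f' ξ := by rw [hderiv_eq (f ξ)]
      rw [hfun, hval]
      exact h1
    have hg0 : g 0 = 0 := by
      rw [hgdef]
      simp only [h0, abs_zero]
      exact Real.zero_rpow (by linarith)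
    have hg1 : g 1 = 0 := by
      rw [hgdef]
      simp only [h1, abs_zero]
      exact Real.zero_rpow (by linarith)
    have hpoin := poincare g φ hgc hφc hd hg0 hg1
    -- transfer: ∫ g² = K
    have hgK : (∫ ξ in (0:ℝ)..1, g ξ ^ 2) = K := by
      rw [hKdef]
      congr 1
      funext ξ
      exact hgsq (f ξ)
    -- transfer: ∫ φ² = p²/4 * J
    have hφsq : ∀ ξ : ℝ, φ ξ ^ 2 = p ^ 2 / 4 * (|f ξ| ^ (p - 2) * f' ξ ^ 2) := by
      have main : ∀ y z : ℝ, (r * (y * |y| ^ (r - 2)) * z) ^ 2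
          = p ^ 2 / 4 * (|y| ^ (p - 2) * z ^ 2) := by
        intro y z
        rcases eq_or_ne y 0 with rfl | hy
        · rw [abs_zero, Real.zero_rpow (by linarith : p - 2 ≠ 0)]
          ring
        · have e1 : (|y| ^ (r - 2)) ^ 2 = |y| ^ (2 * (r - 2)) := by
            rw [← Real.rpow_natCast (|y| ^ (r - 2)) 2, ← Real.rpow_mul (abs_nonneg y)]
            congr 1
            push_cast
            ring
          have e2 : y ^ 2 = |y| ^ (2:ℝ) := by
            rw [show (2:ℝ) = ((2:ℕ):ℝ) by norm_num, Real.rpow_natCast, sq_abs]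
          have e3 : |y| ^ (2:ℝ) * |y| ^ (2 * (r - 2)) = |y| ^ (p - 2) := by
            rw [← Real.rpow_add (abs_pos.mpr hy)]
            congr 1
            rw [hrdef]; ring
          calc (r * (y * |y| ^ (r - 2)) * z) ^ 2
              = r ^ 2 * (y ^ 2 * (|y| ^ (r - 2)) ^ 2) * z ^ 2 := by ring
            _ = r ^ 2 * (|y| ^ (2:ℝ) * |y| ^ (2 * (r - 2))) * z ^ 2 := by rw [e1, e2]
            _ = r ^ 2 * |y| ^ (p - 2) * z ^ 2 := by rw [e3]
            _ = p ^ 2 / 4 * (|y| ^ (p - 2) * z ^ 2) := by rw [hrdef]; ring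
      intro ξ
      rw [hφdef]
      exact main (f ξ) (f' ξ)
    have hφJ : (∫ ξ in (0:ℝ)..1, φ ξ ^ 2) = p ^ 2 / 4 * J := by
      rw [show (fun ξ => φ ξ ^ 2) = fun ξ => p ^ 2 / 4 * (|f ξ| ^ (p - 2) * f' ξ ^ 2)
        from funext hφsq, hJdef, intervalIntegral.integral_const_mul]
    rw [hgK, hφJ] at hpoin
    -- final arithmetic
    rw [hIBP]
    have hppos : (0:ℝ) < p := by linarith
    have hc : (0:ℝ) < 4 * (p - 1) / p ^ 2 := div_pos (by linarith) (by positivity)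
    have h2 := mul_le_mul_of_nonneg_left hpoin hc.le
    have h3 : 4 * (p - 1) / p ^ 2 * (p ^ 2 / 4 * J) = (p - 1) * J := by
      field_simp
    nlinarith [h2, h3]
end

section
/- Let p ∈ [2,∞) be a real number and let f : [0,1] → ℝ be twice continuously differentiable with f(0) = f(1) = 0. Then the integration-by-parts identity ∫₀¹ f''(ξ) · f(ξ) · |f(ξ)|^{p−2} dξ = −(p−1) · ∫₀¹ f'(ξ)² · |f(ξ)|^{p−2} dξ holds. -/
open Real Filter

lemma hasDerivAt_phi (p : ℝ) (hp : 2 ≤ p) (y : ℝ) :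
    HasDerivAt (fun y : ℝ => y * |y| ^ (p - 2)) ((p - 1) * |y| ^ (p - 2)) y := by
  rcases eq_or_ne y 0 with rfl | hy
  · rw [hasDerivAt_iff_tendsto_slope]
    have h1 : Tendsto (fun h : ℝ => |h| ^ (p - 2)) (nhdsWithin 0 {(0:ℝ)}ᶜ)
        (nhds (|(0:ℝ)| ^ (p - 2))) := by
      apply Tendsto.mono_left _ nhdsWithin_le_nhds
      exact ((Real.continuousAt_rpow_const _ _ (Or.inr (by linarith))).comp
        continuous_abs.continuousAt)
    have heq : ∀ h ∈ ({(0:ℝ)}ᶜ : Set ℝ),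
        slope (fun y : ℝ => y * |y| ^ (p - 2)) 0 h = |h| ^ (p - 2) := by
      intro h hh
      simp only [Set.mem_compl_iff, Set.mem_singleton_iff] at hh
      rw [slope_def_field]
      field_simp
      ring
    have h2 := h1.congr' (Filter.eventuallyEq_of_mem self_mem_nhdsWithin
      fun h hh => (heq h hh).symm)
    convert h2 using 2
    rcases eq_or_lt_of_le hp with h3 | h3
    · rw [← h3]; norm_num
    · rw [abs_zero, Real.zero_rpow (by linarith), mul_zero]
  · have habs : HasDerivAt (fun y : ℝ => |y|) (SignType.sign y : ℝ) y := hasDerivAt_abs hy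
    have hr : HasDerivAt (fun t : ℝ => t ^ (p - 2)) ((p - 2) * |y| ^ (p - 2 - 1)) |y| :=
      Real.hasDerivAt_rpow_const (Or.inl (abs_ne_zero.mpr hy))
    have hcomp : HasDerivAt (fun y : ℝ => |y| ^ (p - 2))
        ((p - 2) * |y| ^ (p - 2 - 1) * (SignType.sign y : ℝ)) y := hr.comp y habs
    have hprod := (hasDerivAt_id y).mul hcomp
    have hay : (0:ℝ) < |y| := abs_pos.mpr hy
    have h3 : y * (SignType.sign y : ℝ) = |y| := by
      rcases lt_or_gt_of_ne hy with h | h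
      · simp [h, abs_of_neg h]
      · simp [h, abs_of_pos h]
    have h4 : |y| ^ (p - 2 - 1) * |y| = |y| ^ (p - 2) := by
      have h := (Real.rpow_add hay (p - 2 - 1) 1).symm
      rw [Real.rpow_one] at h
      rw [h]; norm_num
    convert hprod using 1
    case e'_4 => rfl
    case e'_5 => rfl
    case e'_8 => rfl
    rw [id_eq, one_mul]
    rw [show y * ((p - 2) * |y| ^ (p - 2 - 1) * (SignType.sign y : ℝ))
      = (p - 2) * (|y| ^ (p - 2 - 1) * (y * (SignType.sign y : ℝ))) by ring, h3, h4]
    ring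

/-- Integration by parts identity: for a real `p ∈ [2,∞)` and a twice continuously
differentiable `f : [0,1] → ℝ` (with first and second derivatives `f'` and `f''`)
vanishing at the endpoints,
`∫₀¹ f'' f |f|^{p-2} = -(p-1) ∫₀¹ (f')² |f|^{p-2}`.
The powers are real powers, so for `p = 2` one has `|f|^{p-2} = |f|^0 = 1`, and for
`p > 2` both integrands vanish wherever `f` vanishes. -/
theorem integration_by_parts_identity
    (p : ℝ) (hp : 2 ≤ p)
    (f f' f'' : ℝ → ℝ)
    (hf' : ∀ ξ ∈ Set.Icc (0 : ℝ) 1, HasDerivAt f (f' ξ) ξ)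
    (hf'' : ∀ ξ ∈ Set.Icc (0 : ℝ) 1, HasDerivAt f' (f'' ξ) ξ)
    (hcont : ContinuousOn f'' (Set.Icc (0 : ℝ) 1))
    (h0 : f 0 = 0) (h1 : f 1 = 0) :
    ∫ ξ in (0 : ℝ)..1, f'' ξ * f ξ * |f ξ| ^ (p - 2) =
      -(p - 1) * ∫ ξ in (0 : ℝ)..1, f' ξ ^ 2 * |f ξ| ^ (p - 2) := by
  have huIcc : Set.uIcc (0:ℝ) 1 = Set.Icc (0:ℝ) 1 := Set.uIcc_of_le zero_le_one
  set g : ℝ → ℝ := fun ξ => f ξ * |f ξ| ^ (p - 2) with hg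
  set g' : ℝ → ℝ := fun ξ => (p - 1) * |f ξ| ^ (p - 2) * f' ξ with hg'
  have hgd : ∀ ξ ∈ Set.uIcc (0:ℝ) 1, HasDerivAt g (g' ξ) ξ := by
    intro ξ hξ
    rw [huIcc] at hξ
    exact (hasDerivAt_phi p hp (f ξ)).comp ξ (hf' ξ hξ)
  have hfc : ContinuousOn f (Set.Icc (0:ℝ) 1) :=
    fun ξ hξ => (hf' ξ hξ).continuousAt.continuousWithinAt
  have hf'c : ContinuousOn f' (Set.Icc (0:ℝ) 1) :=
    fun ξ hξ => (hf'' ξ hξ).continuousAt.continuousWithinAt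
  have habsc : ContinuousOn (fun ξ => |f ξ| ^ (p - 2)) (Set.Icc (0:ℝ) 1) := by
    intro ξ hξ
    exact ((Real.continuousAt_rpow_const _ _ (Or.inr (by linarith))).comp
      continuous_abs.continuousAt).continuousWithinAt.comp (hfc ξ hξ) (Set.mapsTo_univ _ _)
  have hg'c : ContinuousOn g' (Set.Icc (0:ℝ) 1) :=
    (continuousOn_const.mul habsc).mul hf'c
  have hgc : ContinuousOn g (Set.Icc (0:ℝ) 1) := hfc.mul habsc
  have hint1 : IntervalIntegrable f'' MeasureTheory.volume 0 1 :=
    (hcont.mono (by rw [huIcc])).intervalIntegrable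
  have hint2 : IntervalIntegrable g' MeasureTheory.volume 0 1 :=
    (hg'c.mono (by rw [huIcc])).intervalIntegrable
  have hf'd : ∀ ξ ∈ Set.uIcc (0:ℝ) 1, HasDerivAt f' (f'' ξ) ξ := by
    rw [huIcc]; exact hf''
  have key := intervalIntegral.integral_mul_deriv_eq_deriv_mul hf'd hgd hint1 hint2
  have hg0 : g 0 = 0 := by simp [hg, h0]
  have hg1 : g 1 = 0 := by simp [hg, h1]
  rw [hg0, hg1] at key
  have e1 : (∫ ξ in (0:ℝ)..1, f'' ξ * f ξ * |f ξ| ^ (p - 2)) =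
      ∫ ξ in (0:ℝ)..1, f'' ξ * g ξ := by
    apply intervalIntegral.integral_congr
    intro ξ _; simp [hg, mul_assoc]
  have e2 : (∫ ξ in (0:ℝ)..1, f' ξ * g' ξ) =
      (p - 1) * ∫ ξ in (0:ℝ)..1, f' ξ ^ 2 * |f ξ| ^ (p - 2) := by
    rw [← intervalIntegral.integral_const_mul]
    apply intervalIntegral.integral_congr
    intro ξ _; simp [hg']; ring
  rw [e1]
  have : (∫ ξ in (0:ℝ)..1, f'' ξ * g ξ) = -(∫ ξ in (0:ℝ)..1, f' ξ * g' ξ) := by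
    linarith [key]
  rw [this, e2]; ring
end

section
/- For every c > 0 and every ε ∈ (0,1] there exists a constant C ∈ (0,∞) such that for all Δt ∈ (0,1] and all integers n ≥ 1: Δt · Σ_{k=1}^{n} e^{−c·kΔt} · (kΔt)^{ε−1} ≤ C. -/
open Real MeasureTheory Set

/-- Discrete convolution estimate: for every `c > 0` and `ε ∈ (0,1]` there is a constant
`C ∈ (0,∞)` such that for all `Δt ∈ (0,1]` and all integers `n ≥ 1`,
`Δt Σ_{k=1}^{n} e^{-c k Δt} (k Δt)^{ε-1} ≤ C`. -/
theorem discrete_convolution_estimate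
    (c ε : ℝ) (hc : 0 < c) (hε0 : 0 < ε) (hε1 : ε ≤ 1) :
    ∃ C : ℝ, 0 < C ∧ ∀ Δt : ℝ, 0 < Δt → Δt ≤ 1 → ∀ n : ℕ, 1 ≤ n →
      Δt * ∑ k ∈ Finset.Icc 1 n,
          Real.exp (-c * ((k : ℝ) * Δt)) * ((k : ℝ) * Δt) ^ (ε - 1) ≤ C := by
  set f : ℝ → ℝ := fun x => Real.exp (-c * x) * x ^ (ε - 1) with hf
  have hint : IntegrableOn f (Ioi 0) := by
    have h0 : IntegrableOn (fun x : ℝ => Real.exp (-x) * x ^ (ε - 1)) (Ioi 0) :=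
      Real.GammaIntegral_convergent hε0
    have h1 : IntegrableOn (fun x : ℝ => Real.exp (-(c * x)) * (c * x) ^ (ε - 1)) (Ioi 0) := by
      have := (integrableOn_Ioi_comp_mul_left_iff
        (fun x : ℝ => Real.exp (-x) * x ^ (ε - 1)) 0 hc).2 (by simpa using h0)
      simpa using this
    have h2 : IntegrableOn (fun x : ℝ => c ^ (1 - ε) * (Real.exp (-(c * x)) * (c * x) ^ (ε - 1))) (Ioi 0) := by
      exact h1.const_mul (c ^ (1 - ε))
    refine IntegrableOn.congr_fun h2 (fun x hx => ?_) measurableSet_Ioi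
    simp only [hf, Real.mul_rpow hc.le (le_of_lt hx)]
    rw [show c ^ (1-ε) * (Real.exp (-(c*x)) * (c ^ (ε-1) * x ^ (ε-1)))
        = (c ^ (1-ε) * c ^ (ε-1)) * (Real.exp (-(c*x)) * x ^ (ε-1)) by ring, ← Real.rpow_add hc]
    norm_num [neg_mul]
  have hfnn : ∀ x ∈ Ioi (0:ℝ), 0 ≤ f x := fun x hx =>
    mul_nonneg (Real.exp_nonneg _) (Real.rpow_nonneg (le_of_lt hx) _)
  have hCnn : 0 ≤ ∫ x in Ioi 0, f x := setIntegral_nonneg measurableSet_Ioi hfnn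
  refine ⟨(∫ x in Ioi 0, f x) + 1, by linarith, ?_⟩
  intro Δt hΔt _ n _
  have hanti : ∀ x y : ℝ, 0 < x → x ≤ y → f y ≤ f x := by
    intro x y hx hxy
    apply mul_le_mul _ (Real.rpow_le_rpow_of_nonpos hx hxy (by linarith)) (Real.rpow_nonneg (by linarith) _) (Real.exp_nonneg _)
    exact Real.exp_le_exp.2 (by nlinarith)
  -- key: Δt * f ((i+1)Δt) ≤ ∫ over Ioc (iΔt) ((i+1)Δt)
  have key : ∀ i : ℕ, Δt * f ((i + 1 : ℕ) * Δt) ≤ ∫ x in Ioc ((i:ℝ) * Δt) (((i:ℝ)+1) * Δt), f x := by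
    intro i
    have hsub : Ioc ((i:ℝ) * Δt) (((i:ℝ)+1) * Δt) ⊆ Ioi 0 := fun x hx =>
      lt_of_le_of_lt (by positivity) hx.1
    have h := setIntegral_ge_of_const_le_real (c := f (((i:ℝ)+1) * Δt))
      (s := Ioc ((i:ℝ) * Δt) (((i:ℝ)+1) * Δt)) measurableSet_Ioc (by simp)
      (fun x hx => hanti x _ (hsub hx) hx.2) (hint.mono_set hsub)
    rw [Real.volume_real_Ioc_of_le (by nlinarith)] at h
    calc Δt * f ((i + 1 : ℕ) * Δt) = f (((i:ℝ)+1) * Δt) * (((i:ℝ)+1) * Δt - (i:ℝ) * Δt) := by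
          push_cast; ring_nf
      _ ≤ _ := h
  have hii : ∀ i : ℕ, IntervalIntegrable f volume ((i:ℝ) * Δt) (((i:ℝ)+1) * Δt) := by
    intro i
    rw [intervalIntegrable_iff_integrableOn_Ioc_of_le (by nlinarith [Nat.cast_nonneg (α := ℝ) i])]
    exact hint.mono_set fun x hx => lt_of_le_of_lt (by positivity) hx.1
  have hsum : ∑ i ∈ Finset.range n, ∫ x in Ioc ((i:ℝ) * Δt) (((i:ℝ)+1) * Δt), f x
      = ∫ x in Ioc 0 ((n:ℝ) * Δt), f x := by
    have := intervalIntegral.sum_integral_adjacent_intervals (a := fun i : ℕ => (i:ℝ) * Δt)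
      (n := n) (fun k _ => by push_cast; exact hii k)
    simp only [Nat.cast_zero, zero_mul] at this
    rw [← intervalIntegral.integral_of_le (by positivity), ← this]
    refine Finset.sum_congr rfl fun i _ => ?_
    rw [intervalIntegral.integral_of_le (by push_cast; nlinarith [Nat.cast_nonneg (α := ℝ) i])]
    push_cast; ring_nf
  have htail : ∫ x in Ioc 0 ((n:ℝ) * Δt), f x ≤ ∫ x in Ioi 0, f x := by
    apply setIntegral_mono_set hint
    · filter_upwards [self_mem_ae_restrict measurableSet_Ioi] with x hx using hfnn x hx
    · exact HasSubset.Subset.eventuallyLE Ioc_subset_Ioi_self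
  calc Δt * ∑ k ∈ Finset.Icc 1 n, Real.exp (-c * ((k : ℝ) * Δt)) * ((k : ℝ) * Δt) ^ (ε - 1)
      = ∑ i ∈ Finset.range n, Δt * f ((i + 1 : ℕ) * Δt) := by
        rw [Finset.mul_sum, show Finset.Icc 1 n = Finset.Ico 1 (n+1) by rw [Finset.Ico_add_one_right_eq_Icc],
          Finset.sum_Ico_eq_sum_range]
        simp only [Nat.add_sub_cancel]
        refine Finset.sum_congr rfl fun i _ => ?_
        simp only [hf]
        push_cast
        ring_nf
    _ ≤ ∑ i ∈ Finset.range n, ∫ x in Ioc ((i:ℝ) * Δt) (((i:ℝ)+1) * Δt), f x :=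
        Finset.sum_le_sum fun i _ => key i
    _ = ∫ x in Ioc 0 ((n:ℝ) * Δt), f x := hsum
    _ ≤ ∫ x in Ioi 0, f x := htail
    _ ≤ _ := by linarith
end

section
/- Let (λ_j)_{j≥1} be positive reals, (q_j)_{j≥1} be nonnegative reals, and α ≥ 0 be such that S := Σ_{j≥1} q_j · λ_j^{2α−1} < ∞. Let (ξ_{ℓ,j})_{ℓ≥0, j≥1} be a family of independent standard real Gaussian random variables on a probability space. Fix Δt > 0 and an integer n ≥ 1, and for each j ≥ 1 define the random variable G_j = λ_j^α · (q_j Δt)^{1/2} · Σ_{k=1}^{n} e^{−λ_j kΔt} · ξ_{n−k, j}. Then Σ_{j≥1} E[G_j²] ≤ S/2; in particular, almost surely (G_j)_{j≥1} ∈ ℓ² and the ℓ²-valued random variable Z = (G_j)_{j≥1} satisfies E[‖Z‖_{ℓ²}²] ≤ S/2, uniformly in n and Δt. -/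
open MeasureTheory ProbabilityTheory Real

lemma aux_int_sq : Integrable (fun x : ℝ => x ^ 2 * Real.exp (-(1/2) * x ^ 2)) := by
  have := integrable_rpow_mul_exp_neg_mul_sq (b := 1/2) (by norm_num) (s := 2) (by norm_num)
  have h : (fun x : ℝ => x ^ (2:ℝ) * Real.exp (-(1/2) * x ^ 2)) =
      fun x : ℝ => x ^ 2 * Real.exp (-(1/2) * x ^ 2) := by
    funext x
    rw [show (2:ℝ) = ((2:ℕ):ℝ) by norm_num, Real.rpow_natCast]
  rwa [h] at this

lemma aux_int_one : Integrable (fun x : ℝ => x * Real.exp (-(1/2) * x ^ 2)) :=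
  integrable_mul_exp_neg_mul_sq (by norm_num)

lemma aux_J : ∫ x : ℝ, x ^ 2 * Real.exp (-(1/2) * x ^ 2) = Real.sqrt (2 * π) := by
  have heven : (fun x : ℝ => x ^ 2 * Real.exp (-(1/2) * x ^ 2)) =
      fun x : ℝ => |x| ^ 2 * Real.exp (-(1/2) * |x| ^ 2) := by
    funext x; rw [sq_abs]
  rw [heven]
  rw [integral_comp_abs (f := fun x : ℝ => x ^ 2 * Real.exp (-(1/2) * x ^ 2))]
  have : ∫ x in Set.Ioi (0:ℝ), x ^ 2 * Real.exp (-(1/2) * x ^ 2)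
      = ∫ x in Set.Ioi (0:ℝ), x ^ (2:ℝ) * Real.exp (-(1/2) * x ^ (2:ℝ)) := by
    refine setIntegral_congr_fun measurableSet_Ioi (fun x hx => ?_)
    rw [show (2:ℝ) = ((2:ℕ):ℝ) by norm_num, Real.rpow_natCast]
  rw [this, integral_rpow_mul_exp_neg_mul_rpow (by norm_num) (by norm_num) (by norm_num)]
  rw [show ((2:ℝ)+1)/2 = 1/2 + 1 by norm_num, Real.Gamma_add_one (by norm_num),
    Real.Gamma_one_half_eq]
  rw [show (-((2:ℝ)+1)/2 : ℝ) = -(3/2 : ℝ) by norm_num]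
  rw [show ((1:ℝ)/2) = 2⁻¹ by norm_num, Real.inv_rpow (by norm_num), ← Real.rpow_neg (by norm_num),
    neg_neg]
  rw [Real.sqrt_eq_rpow, Real.sqrt_eq_rpow, Real.mul_rpow (by norm_num) (le_of_lt Real.pi_pos)]
  rw [show ((3:ℝ)/2 : ℝ) = 1 + 1/2 by norm_num, Real.rpow_add (by norm_num), Real.rpow_one]
  ring

lemma aux_pdf (x : ℝ) : gaussianPDFReal 0 1 x = (Real.sqrt (2*π))⁻¹ * Real.exp (-(1/2) * x ^ 2) := by
  simp only [gaussianPDFReal, NNReal.coe_one, mul_one, sub_zero]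
  ring_nf

lemma aux_gauss_eq : gaussianReal 0 1 =
    (volume : Measure ℝ).withDensity (fun x => ENNReal.ofReal (gaussianPDFReal 0 1 x)) := by
  rw [gaussianReal_of_var_ne_zero 0 one_ne_zero]; rfl

lemma aux_integrable_withDensity (g : ℝ → ℝ) (hg : Measurable g)
    (h : Integrable (fun x => g x * gaussianPDFReal 0 1 x)) :
    Integrable g (gaussianReal 0 1) := by
  rw [aux_gauss_eq, integrable_withDensity_iff ((measurable_gaussianPDFReal 0 1).ennreal_ofReal)
    (Filter.Eventually.of_forall fun x => ENNReal.ofReal_lt_top)]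
  refine h.congr ?_
  filter_upwards with x
  rw [ENNReal.toReal_ofReal (gaussianPDFReal_nonneg 0 1 x)]

lemma aux_integral_withDensity (g : ℝ → ℝ) (hg : Measurable g) :
    ∫ x, g x ∂(gaussianReal 0 1) = ∫ x, g x * gaussianPDFReal 0 1 x := by
  rw [aux_gauss_eq]
  have h2 : (fun x => ENNReal.ofReal (gaussianPDFReal 0 1 x))
      = fun x => (((gaussianPDFReal 0 1 x).toNNReal : NNReal) : ENNReal) := rfl
  rw [h2, integral_withDensity_eq_integral_smul
    ((measurable_gaussianPDFReal 0 1).real_toNNReal) g]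
  congr 1; funext x
  rw [NNReal.smul_def, smul_eq_mul, Real.coe_toNNReal _ (gaussianPDFReal_nonneg 0 1 x), mul_comm]

lemma aux_int_id_gauss : Integrable (fun x : ℝ => x) (gaussianReal 0 1) := by
  refine aux_integrable_withDensity _ measurable_id ?_
  simp_rw [aux_pdf]
  exact (aux_int_one.const_mul ((Real.sqrt (2*π))⁻¹)).congr
    (by filter_upwards with x; ring)

lemma aux_int_sq_gauss : Integrable (fun x : ℝ => x ^ 2) (gaussianReal 0 1) := by
  refine aux_integrable_withDensity _ (by fun_prop) ?_
  simp_rw [aux_pdf]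
  exact (aux_int_sq.const_mul ((Real.sqrt (2*π))⁻¹)).congr
    (by filter_upwards with x; ring)

lemma aux_E2 : ∫ x, x ^ 2 ∂(gaussianReal 0 1) = 1 := by
  rw [aux_integral_withDensity _ (by fun_prop)]
  simp_rw [aux_pdf]
  have : ∫ x : ℝ, x ^ 2 * ((Real.sqrt (2*π))⁻¹ * Real.exp (-(1/2) * x ^ 2))
      = ∫ x : ℝ, (Real.sqrt (2*π))⁻¹ * (x ^ 2 * Real.exp (-(1/2) * x ^ 2)) := by
    congr 1; funext x; ring
  rw [this, integral_const_mul, aux_J, inv_mul_cancel₀]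
  positivity

lemma aux_E1 : ∫ x, x ∂(gaussianReal 0 1) = 0 := by
  rw [aux_integral_withDensity (fun x => x) measurable_id]
  set g : ℝ → ℝ := fun x => x * gaussianPDFReal 0 1 x with hg
  have hgm : Measurable g := measurable_id.mul (measurable_gaussianPDFReal 0 1)
  have hodd : ∀ x, g (-x) = - g x := by
    intro x
    simp only [hg, aux_pdf, neg_sq, neg_mul]
  have h1 : ∫ x, g x = ∫ x, g (-x) := by
    conv_lhs => rw [← Measure.map_neg_eq_self (volume : Measure ℝ)]
    rw [integral_map measurable_neg.aemeasurable hgm.aestronglyMeasurable]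
  have h2 : ∫ x, g (-x) = - ∫ x, g x := by
    simp_rw [hodd]; exact integral_neg g
  linarith

section RV
variable {Ω : Type*} [MeasurableSpace Ω] {P : Measure Ω} [IsProbabilityMeasure P]
  {X : Ω → ℝ} (hXm : Measurable X) (hXg : Measure.map X P = gaussianReal 0 1)

include hXm hXg

lemma aux_rv_int : Integrable X P := by
  have := (integrable_map_measure (f := X) (g := fun x : ℝ => x)
    (by rw [hXg]; exact aux_int_id_gauss.aestronglyMeasurable) hXm.aemeasurable).mp
    (by rw [hXg]; exact aux_int_id_gauss)
  exact this

lemma aux_rv_int_sq : Integrable (fun ω => X ω ^ 2) P := by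
  have := (integrable_map_measure (f := X) (g := fun x : ℝ => x ^ 2)
    (by rw [hXg]; exact aux_int_sq_gauss.aestronglyMeasurable) hXm.aemeasurable).mp
    (by rw [hXg]; exact aux_int_sq_gauss)
  exact this

lemma aux_rv_memℒp : MemLp X 2 P :=
  (memLp_two_iff_integrable_sq hXm.aestronglyMeasurable).mpr (aux_rv_int_sq hXm hXg)

lemma aux_rv_E1 : ∫ ω, X ω ∂P = 0 := by
  have := integral_map (f := fun x : ℝ => x) hXm.aemeasurable
    (by rw [hXg]; exact aux_int_id_gauss.aestronglyMeasurable)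
  rw [hXg, aux_E1] at this
  exact this.symm

lemma aux_rv_E2 : ∫ ω, X ω ^ 2 ∂P = 1 := by
  have := integral_map (f := fun x : ℝ => x ^ 2) hXm.aemeasurable
    (by rw [hXg]; exact aux_int_sq_gauss.aestronglyMeasurable)
  rw [hXg, aux_E2] at this
  exact this.symm

lemma aux_rv_var : variance X P = 1 := by
  rw [variance_eq_sub (aux_rv_memℒp hXm hXg)]
  have e2 : (∫ ω, (X ^ 2) ω ∂P) = 1 := by
    simpa [Pi.pow_apply] using aux_rv_E2 hXm hXg
  rw [e2, aux_rv_E1 hXm hXg]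
  norm_num

end RV

lemma aux_moment {Ω : Type*} [MeasurableSpace Ω] (P : Measure Ω) [IsProbabilityMeasure P]
    (s : Finset ℕ) (X : ℕ → Ω → ℝ) (hXm : ∀ k, Measurable (X k))
    (hXg : ∀ k, Measure.map (X k) P = gaussianReal 0 1)
    (hXind : Set.Pairwise (s : Set ℕ) (fun k l => IndepFun (X k) (X l) P))
    (a : ℕ → ℝ) :
    ∫ ω, (∑ k ∈ s, a k * X k ω) ^ 2 ∂P = ∑ k ∈ s, (a k) ^ 2 := by
  set Y : ℕ → Ω → ℝ := fun k => fun ω => a k * X k ω with hY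
  have hYmem : ∀ k ∈ s, MemLp (Y k) 2 P := fun k _ =>
    (aux_rv_memℒp (hXm k) (hXg k)).const_mul (a k)
  have hYind : Set.Pairwise (s : Set ℕ) (fun k l => IndepFun (Y k) (Y l) P) := by
    intro k hk l hl hkl
    exact (hXind hk hl hkl).comp (measurable_const_mul (a k)) (measurable_const_mul (a l))
  have hWmem : MemLp (∑ k ∈ s, Y k) 2 P := memLp_finset_sum' s hYmem
  have hvar := IndepFun.variance_sum (μ := P) hYmem hYind
  have hvarY : ∀ k ∈ s, variance (Y k) P = (a k) ^ 2 := by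
    intro k _
    show variance (fun ω => a k * X k ω) P = _
    rw [variance_const_mul (a k) (X k), aux_rv_var (hXm k) (hXg k), mul_one]
  have hEW : ∫ ω, (∑ k ∈ s, Y k) ω ∂P = 0 := by
    simp only [Finset.sum_apply]
    rw [integral_finset_sum _ (fun k _ => ((aux_rv_int (hXm k) (hXg k)).const_mul (a k)))]
    refine Finset.sum_eq_zero fun k _ => ?_
    show ∫ ω, a k * X k ω ∂P = 0
    rw [integral_const_mul, aux_rv_E1 (hXm k) (hXg k), mul_zero]
  have hdef := variance_eq_sub hWmem
  rw [hvar, Finset.sum_congr rfl hvarY] at hdef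
  have hE2 : (∫ ω, ((∑ k ∈ s, Y k) ^ 2) ω ∂P) = ∫ ω, (∑ k ∈ s, a k * X k ω) ^ 2 ∂P := by
    congr 1; funext ω
    simp [Finset.sum_apply, hY]
  rw [hE2, hEW] at hdef
  linarith

lemma aux_geom (lam Δt : ℝ) (hlam : 0 < lam) (hΔt : 0 < Δt) (n : ℕ) :
    ∑ k ∈ Finset.Icc 1 n, Real.exp (-lam * ((k : ℝ) * Δt)) ^ 2 ≤ 1 / (2 * lam * Δt) := by
  set x : ℝ := 2 * lam * Δt with hx
  have hx0 : 0 < x := by positivity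
  set r : ℝ := Real.exp (-x) with hr
  have hr0 : 0 < r := Real.exp_pos _
  have hr1 : r < 1 := by
    rw [hr, Real.exp_lt_one_iff]; linarith
  have hterm : ∀ k : ℕ, Real.exp (-lam * ((k : ℝ) * Δt)) ^ 2 = r ^ k := by
    intro k
    rw [hr, ← Real.exp_nat_mul, ← Real.exp_nat_mul]
    congr 1
    push_cast
    ring
  simp_rw [hterm]
  have hre : ∑ k ∈ Finset.Icc 1 n, r ^ k = r * ∑ i ∈ Finset.range n, r ^ i := by
    rw [← Finset.Ico_add_one_right_eq_Icc, Finset.sum_Ico_eq_sum_range]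
    simp only [Nat.add_sub_cancel, Nat.succ_sub_one]
    rw [Finset.mul_sum]
    exact Finset.sum_congr rfl fun i _ => by rw [pow_add, pow_one]
  rw [hre]
  have hgs : ∑ i ∈ Finset.range n, r ^ i ≤ 1 / (1 - r) := by
    rw [geom_sum_eq (ne_of_lt hr1), ← neg_div_neg_eq, neg_sub, neg_sub]
    gcongr
    · nlinarith [pow_nonneg hr0.le n]
  have hxr : x * r ≤ 1 - r := by
    have h1 : x + 1 ≤ Real.exp x := Real.add_one_le_exp x
    have h2 : (x + 1) * r ≤ Real.exp x * r := by nlinarith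
    rw [hr, ← Real.exp_add] at h2
    simp only [add_neg_cancel, Real.exp_zero] at h2
    nlinarith
  calc r * ∑ i ∈ Finset.range n, r ^ i ≤ r * (1 / (1 - r)) := by
        exact mul_le_mul_of_nonneg_left hgs hr0.le
    _ = r / (1 - r) := by ring
    _ ≤ 1 / x := by
        rw [div_le_div_iff₀ (by linarith) hx0]
        nlinarith
/-- Uniform moment bound for the exponential-Euler discretization of the stochastic
convolution (diagonal-noise case): let `(λ_j)` be positive reals, `(q_j)` nonnegative
reals, and `α ≥ 0` with `S = Σ_j q_j λ_j^{2α-1} < ∞`. Let `(ξ_{ℓ,j})` be a family of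
independent standard real Gaussian random variables, fix `Δt > 0` and an integer `n ≥ 1`,
and set `G_j = λ_j^α (q_j Δt)^{1/2} Σ_{k=1}^{n} e^{-λ_j k Δt} ξ_{n-k,j}`. Then
`Σ_j E[G_j²] ≤ S/2`; in particular, almost surely `(G_j)_j ∈ ℓ²`, and
`E[‖(G_j)_j‖²_{ℓ²}] = E[Σ_j G_j²] ≤ S/2`, uniformly in `n` and `Δt`. -/
theorem exponential_euler_stochastic_convolution_moment_bound
    {Ω : Type*} [MeasurableSpace Ω] (P : Measure Ω) [IsProbabilityMeasure P]
    (lam q : ℕ → ℝ) (hlam : ∀ j, 0 < lam j) (hq : ∀ j, 0 ≤ q j)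
    (α : ℝ) (hα : 0 ≤ α)
    (S : ℝ) (hS : HasSum (fun j : ℕ => q j * lam j ^ (2 * α - 1)) S)
    (ξ : ℕ × ℕ → Ω → ℝ)
    (hmeas : ∀ p, Measurable (ξ p))
    (hindep : ProbabilityTheory.iIndepFun ξ P)
    (hgauss : ∀ p, Measure.map (ξ p) P = ProbabilityTheory.gaussianReal 0 1)
    (Δt : ℝ) (hΔt : 0 < Δt) (n : ℕ) (hn : 1 ≤ n)
    (G : ℕ → Ω → ℝ)
    (hG : ∀ j ω, G j ω = lam j ^ α * Real.sqrt (q j * Δt) *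
      ∑ k ∈ Finset.Icc 1 n, Real.exp (-lam j * ((k : ℝ) * Δt)) * ξ (n - k, j) ω) :
    (∑' j : ℕ, ∫ ω, (G j ω) ^ 2 ∂P) ≤ S / 2 ∧
    (∀ᵐ ω ∂P, Summable fun j : ℕ => (G j ω) ^ 2) ∧
    (∫ ω, ∑' j : ℕ, (G j ω) ^ 2 ∂P) ≤ S / 2 := by
  classical
  -- notation
  set c : ℕ → ℝ := fun j => lam j ^ α * Real.sqrt (q j * Δt) with hc
  set e : ℕ → ℕ → ℝ := fun j k => Real.exp (-lam j * ((k : ℝ) * Δt)) with he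
  -- rewriting of G j as a single linear combination
  have hfun : ∀ j ω, G j ω = ∑ k ∈ Finset.Icc 1 n, (c j * e j k) * ξ (n - k, j) ω := by
    intro j ω
    rw [hG j ω, Finset.mul_sum]
    exact Finset.sum_congr rfl fun k _ => (mul_assoc _ _ _).symm
  -- measurability of G j
  have hGm : ∀ j, Measurable (G j) := by
    intro j
    have : G j = fun ω => ∑ k ∈ Finset.Icc 1 n, (c j * e j k) * ξ (n - k, j) ω := by
      funext ω; exact hfun j ω
    rw [this]
    exact Finset.measurable_sum _ fun k _ => (hmeas _).const_mul _
  -- pairwise independence of selected coordinates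
  have hpair : ∀ j, Set.Pairwise ((Finset.Icc 1 n : Finset ℕ) : Set ℕ)
      (fun k l => IndepFun (fun ω => ξ (n - k, j) ω) (fun ω => ξ (n - l, j) ω) P) := by
    intro j k hk l hl hkl
    have hk' : 1 ≤ k ∧ k ≤ n := by simpa [Finset.mem_Icc] using hk
    have hl' : 1 ≤ l ∧ l ≤ n := by simpa [Finset.mem_Icc] using hl
    have hne : (n - k, j) ≠ (n - l, j) := by
      intro h
      apply hkl
      have := congrArg Prod.fst h
      simp only at this
      omega
    exact hindep.indepFun hne
  -- second moment identity for each j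
  have hkey : ∀ j, ∫ ω, (G j ω) ^ 2 ∂P = ∑ k ∈ Finset.Icc 1 n, (c j * e j k) ^ 2 := by
    intro j
    have h1 : ∫ ω, (G j ω) ^ 2 ∂P
        = ∫ ω, (∑ k ∈ Finset.Icc 1 n, (c j * e j k) * ξ (n - k, j) ω) ^ 2 ∂P := by
      congr 1; funext ω; rw [hfun j ω]
    rw [h1]
    exact aux_moment P (Finset.Icc 1 n) (fun k => fun ω => ξ (n - k, j) ω)
      (fun k => hmeas _) (fun k => hgauss _) (hpair j) (fun k => c j * e j k)
  -- per-coordinate bound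
  have hbound : ∀ j, ∫ ω, (G j ω) ^ 2 ∂P ≤ q j * lam j ^ (2 * α - 1) / 2 := by
    intro j
    rw [hkey j]
    have hsum : ∑ k ∈ Finset.Icc 1 n, (c j * e j k) ^ 2
        = (c j) ^ 2 * ∑ k ∈ Finset.Icc 1 n, (e j k) ^ 2 := by
      rw [Finset.mul_sum]
      exact Finset.sum_congr rfl fun k _ => (mul_pow _ _ _)
    rw [hsum]
    have hc2 : (c j) ^ 2 = lam j ^ (2 * α) * (q j * Δt) := by
      rw [hc]
      simp only []
      rw [mul_pow, Real.sq_sqrt (mul_nonneg (hq j) hΔt.le)]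
      congr 1
      rw [← Real.rpow_natCast (lam j ^ α) 2, ← Real.rpow_mul (hlam j).le]
      norm_num
      rw [mul_comm]
    have hgeom := aux_geom (lam j) Δt (hlam j) hΔt n
    have hc2nonneg : (0:ℝ) ≤ (c j) ^ 2 := sq_nonneg _
    calc (c j) ^ 2 * ∑ k ∈ Finset.Icc 1 n, (e j k) ^ 2
        ≤ (c j) ^ 2 * (1 / (2 * lam j * Δt)) := by
          exact mul_le_mul_of_nonneg_left hgeom hc2nonneg
      _ = q j * lam j ^ (2 * α - 1) / 2 := by
          rw [hc2, Real.rpow_sub (hlam j), Real.rpow_one]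
          field_simp [hΔt.ne', (hlam j).ne']
  have hEnonneg : ∀ j, 0 ≤ ∫ ω, (G j ω) ^ 2 ∂P := fun j =>
    integral_nonneg fun ω => sq_nonneg _
  -- summability of bounds and of second moments
  have hBsum : Summable (fun j => q j * lam j ^ (2 * α - 1) / 2) := by
    exact (hS.summable).div_const 2
  have hEsum : Summable (fun j => ∫ ω, (G j ω) ^ 2 ∂P) :=
    Summable.of_nonneg_of_le hEnonneg hbound hBsum
  have part1 : (∑' j : ℕ, ∫ ω, (G j ω) ^ 2 ∂P) ≤ S / 2 := by
    calc (∑' j : ℕ, ∫ ω, (G j ω) ^ 2 ∂P)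
        ≤ ∑' j : ℕ, q j * lam j ^ (2 * α - 1) / 2 := Summable.tsum_le_tsum hbound hEsum hBsum
      _ = S / 2 := by rw [tsum_div_const, hS.tsum_eq]
  -- integrability of squares
  have hint : ∀ j, Integrable (fun ω => (G j ω) ^ 2) P := by
    intro j
    have hmem : MemLp (G j) 2 P := by
      have : MemLp (fun ω => ∑ k ∈ Finset.Icc 1 n, (c j * e j k) * ξ (n - k, j) ω) 2 P := by
        have := memLp_finset_sum' (μ := P) (Finset.Icc 1 n)
          (f := fun k => fun ω => (c j * e j k) * ξ (n - k, j) ω)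
          (fun k _ => (aux_rv_memℒp (hmeas _) (hgauss _)).const_mul _)
        refine MemLp.ae_eq ?_ this
        filter_upwards with ω
        simp [Finset.sum_apply]
      refine MemLp.ae_eq ?_ this
      filter_upwards with ω
      exact (hfun j ω).symm
    exact (memLp_two_iff_integrable_sq (hGm j).aestronglyMeasurable).mp hmem
  -- lintegral bookkeeping
  have hlin : ∀ j, ∫⁻ ω, ((‖(G j ω) ^ 2‖₊ : NNReal) : ENNReal) ∂P
      = ENNReal.ofReal (∫ ω, (G j ω) ^ 2 ∂P) := by
    intro j
    have hcongr : ∫⁻ ω, ((‖(G j ω) ^ 2‖₊ : NNReal) : ENNReal) ∂P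
        = ∫⁻ ω, ENNReal.ofReal ((G j ω) ^ 2) ∂P :=
      lintegral_congr fun ω => Real.enorm_eq_ofReal (sq_nonneg _)
    rw [hcongr, ← ofReal_integral_eq_lintegral_ofReal (hint j)
      (Filter.Eventually.of_forall fun ω => sq_nonneg _)]
  have hfin : (∑' j : ℕ, ∫⁻ ω, ((‖(G j ω) ^ 2‖₊ : NNReal) : ENNReal) ∂P) ≠ ⊤ := by
    simp_rw [hlin]
    rw [← ENNReal.ofReal_tsum_of_nonneg hEnonneg hEsum]
    exact ENNReal.ofReal_ne_top
  -- part 2 : a.s. summability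
  have hmeas2 : ∀ j, AEMeasurable (fun ω => ((‖(G j ω) ^ 2‖₊ : NNReal) : ENNReal)) P :=
    fun j => ((hGm j).pow_const 2).nnnorm.coe_nnreal_ennreal.aemeasurable
  have part2 : ∀ᵐ ω ∂P, Summable fun j : ℕ => (G j ω) ^ 2 := by
    have h1 : ∫⁻ ω, ∑' j : ℕ, ((‖(G j ω) ^ 2‖₊ : NNReal) : ENNReal) ∂P ≠ ⊤ := by
      rw [lintegral_tsum hmeas2]
      exact hfin
    refine (ae_lt_top' (AEMeasurable.ennreal_tsum hmeas2) h1).mono fun ω hω => ?_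
    have hsum := ENNReal.tsum_coe_ne_top_iff_summable_coe.mp hω.ne
    refine Summable.of_norm ?_
    simpa [coe_nnnorm] using hsum
  -- part 3
  have part3 : (∫ ω, ∑' j : ℕ, (G j ω) ^ 2 ∂P) ≤ S / 2 := by
    rw [integral_tsum (fun j => ((hGm j).pow_const 2).aestronglyMeasurable) hfin]
    exact part1
  exact ⟨part1, part2, part3⟩
end
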